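/- arXiv:2411.02298 — 2 statements merged into one kernel-verified Lean document; each statement's English description precedes it below -/
import Mathlib

section
/- Fix any γ, ρ, τ > 0 with γ ≤ 0.1, and let μ₁, μ₂, μ₃ ∈ ℝ^d and Σ₁, Σ₂, Σ₃ be d×d symmetric positive definite matrices. Then: (i) if (μ₁, Σ₁) ≈_{γ,ρ,τ} (μ₂, Σ₂), then (μ₂, Σ₂) ≈_{2γ,2ρ,2τ} (μ₁, Σ₁); and (ii) if (μ₁, Σ₁) ≈_{γ,ρ,τ} (μ₂, Σ₂) and (μ₂, Σ₂) ≈_{γ,ρ,τ} (μ₃, Σ₃), then (μ₁, Σ₁) ≈_{4γ,4ρ,4τ} (μ₃, Σ₃). -/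
open MeasureTheory ProbabilityTheory Matrix Real
open scoped ENNReal

noncomputable section

/-- The `ℓ²`-operator norm of a real `d × d` matrix. -/
def opNorm {d : ℕ} (M : Matrix (Fin d) (Fin d) ℝ) : ℝ :=
  ‖(Matrix.toEuclideanCLM (𝕜 := ℝ) M)‖

/-- The Frobenius norm of a real `d × d` matrix. -/
def frobNorm {d : ℕ} (M : Matrix (Fin d) (Fin d) ℝ) : ℝ :=
  Real.sqrt (∑ i, ∑ j, (M i j) ^ 2)

/-- The Euclidean norm of a vector in `ℝ^d`. -/
def vnorm {d : ℕ} (v : Fin d → ℝ) : ℝ := Real.sqrt (∑ i, (v i) ^ 2)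

/-- The positive semidefinite square root of a matrix (junk value `0` if the matrix is not
positive semidefinite). -/
def msqrt {d : ℕ} (S : Matrix (Fin d) (Fin d) ℝ) : Matrix (Fin d) (Fin d) ℝ :=
  letI := Classical.propDecidable S.PosSemidef
  if h : S.PosSemidef then
    (h.1.eigenvectorUnitary : Matrix (Fin d) (Fin d) ℝ) * diagonal ((↑) ∘ (√·) ∘ h.1.eigenvalues) *
      (star (h.1.eigenvectorUnitary : Matrix (Fin d) (Fin d) ℝ))
  else 0

/-- `Σ^{-1/2}`, the inverse of the positive square root. -/
def sqrtInv {d : ℕ} (S : Matrix (Fin d) (Fin d) ℝ) : Matrix (Fin d) (Fin d) ℝ :=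
  (msqrt S)⁻¹

/-- `(μ̂, Σ̂) ≈_{γ,ρ,τ} (μ, Σ)`: spectral, Frobenius, and Mahalanobis closeness. -/
def approx {d : ℕ} (γ ρ τ : ℝ) (p q : (Fin d → ℝ) × Matrix (Fin d) (Fin d) ℝ) : Prop :=
  opNorm (sqrtInv q.2 * p.2 * sqrtInv q.2 - 1) ≤ γ ∧
  frobNorm (sqrtInv q.2 * p.2 * sqrtInv q.2 - 1) ≤ ρ ∧
  vnorm (sqrtInv q.2 *ᵥ (p.1 - q.1)) ≤ τ

section Helpers

variable {d : ℕ} {S : Matrix (Fin d) (Fin d) ℝ}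

lemma msqrt_mul_self (h : S.PosDef) : msqrt S * msqrt S = S := by
  rw [msqrt, dif_pos h.posSemidef]
  have hU : star (h.posSemidef.1.eigenvectorUnitary : Matrix (Fin d) (Fin d) ℝ) *
      (h.posSemidef.1.eigenvectorUnitary : Matrix (Fin d) (Fin d) ℝ) = 1 :=
    Unitary.coe_star_mul_self _
  conv_rhs => rw [h.posSemidef.1.spectral_theorem]
  rw [Unitary.conjStarAlgAut_apply]
  simp only [mul_assoc]
  rw [← mul_assoc (star _) _ _, hU, one_mul, ← mul_assoc (diagonal _) (diagonal _) _,
    diagonal_mul_diagonal]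
  congr 3
  funext i
  simp [Real.mul_self_sqrt (h.posSemidef.eigenvalues_nonneg i)]

lemma msqrt_herm (h : S.PosDef) : (msqrt S).IsHermitian := by
  rw [msqrt, dif_pos h.posSemidef]
  apply isHermitian_mul_mul_conjTranspose
  exact isHermitian_diagonal_of_self_adjoint _ (by ext i; simp)

lemma msqrt_det_ne (h : S.PosDef) : (msqrt S).det ≠ 0 := by
  intro hd
  have : S.det = 0 := by rw [← msqrt_mul_self h, det_mul, hd, mul_zero]
  exact h.det_pos.ne' this

lemma sqrtInv_mul_msqrt (h : S.PosDef) : sqrtInv S * msqrt S = 1 :=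
  Matrix.nonsing_inv_mul _ (isUnit_iff_ne_zero.mpr (msqrt_det_ne h))

lemma msqrt_mul_sqrtInv (h : S.PosDef) : msqrt S * sqrtInv S = 1 :=
  Matrix.mul_nonsing_inv _ (isUnit_iff_ne_zero.mpr (msqrt_det_ne h))

lemma sqrtInv_conj (h : S.PosDef) : sqrtInv S * S * sqrtInv S = 1 := by
  calc sqrtInv S * S * sqrtInv S
      = sqrtInv S * (msqrt S * msqrt S) * sqrtInv S := by rw [msqrt_mul_self h]
    _ = (sqrtInv S * msqrt S) * (msqrt S * sqrtInv S) := by simp only [mul_assoc]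
    _ = 1 := by rw [sqrtInv_mul_msqrt h, msqrt_mul_sqrtInv h, one_mul]

lemma star_eq_transpose (M : Matrix (Fin d) (Fin d) ℝ) : star M = Mᵀ := by
  ext i j
  simp [Matrix.star_apply]

lemma msqrt_transpose (h : S.PosDef) : (msqrt S)ᵀ = msqrt S := by
  rw [← star_eq_transpose]
  exact msqrt_herm h

lemma sqrtInv_transpose (h : S.PosDef) : (sqrtInv S)ᵀ = sqrtInv S := by
  rw [← star_eq_transpose]
  exact (msqrt_herm h).inv

lemma vnorm_eq (v : Fin d → ℝ) :
    vnorm v = ‖(WithLp.equiv 2 (Fin d → ℝ)).symm v‖ := by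
  rw [EuclideanSpace.norm_eq]
  simp [vnorm, Real.norm_eq_abs, sq_abs]

lemma vnorm_nonneg (v : Fin d → ℝ) : 0 ≤ vnorm v := Real.sqrt_nonneg _

lemma vnorm_neg (v : Fin d → ℝ) : vnorm (-v) = vnorm v := by
  simp [vnorm]

lemma opNorm_nonneg (M : Matrix (Fin d) (Fin d) ℝ) : 0 ≤ opNorm M := norm_nonneg _

lemma vnorm_mulVec_le (M : Matrix (Fin d) (Fin d) ℝ) (v : Fin d → ℝ) :
    vnorm (M *ᵥ v) ≤ opNorm M * vnorm v := by
  rw [vnorm_eq, vnorm_eq]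
  have h : (WithLp.equiv 2 (Fin d → ℝ)).symm (M *ᵥ v)
      = Matrix.toEuclideanCLM (𝕜 := ℝ) M ((WithLp.equiv 2 (Fin d → ℝ)).symm v) := by
    rfl
  rw [h]
  exact (Matrix.toEuclideanCLM (𝕜 := ℝ) M).le_opNorm _

lemma vnorm_add_le (u v : Fin d → ℝ) : vnorm (u + v) ≤ vnorm u + vnorm v := by
  rw [vnorm_eq, vnorm_eq, vnorm_eq]
  exact norm_add_le _ _

lemma opNorm_mul_le (M N : Matrix (Fin d) (Fin d) ℝ) :
    opNorm (M * N) ≤ opNorm M * opNorm N := by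
  unfold opNorm
  rw [_root_.map_mul]
  exact norm_mul_le _ _

lemma opNorm_add_le (M N : Matrix (Fin d) (Fin d) ℝ) :
    opNorm (M + N) ≤ opNorm M + opNorm N := by
  unfold opNorm; rw [map_add]; exact norm_add_le _ _

lemma opNorm_neg (M : Matrix (Fin d) (Fin d) ℝ) : opNorm (-M) = opNorm M := by
  unfold opNorm; rw [map_neg, norm_neg]

lemma opNorm_one_le : opNorm (1 : Matrix (Fin d) (Fin d) ℝ) ≤ 1 := by
  unfold opNorm; rw [_root_.map_one]; exact ContinuousLinearMap.norm_id_le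

lemma opNorm_transpose (M : Matrix (Fin d) (Fin d) ℝ) : opNorm Mᵀ = opNorm M := by
  unfold opNorm
  rw [← star_eq_transpose, map_star]
  exact LinearIsometryEquiv.norm_map (ContinuousLinearMap.adjoint (𝕜 := ℝ)) _

lemma opNorm_sq_eq_self_mul_transpose (M : Matrix (Fin d) (Fin d) ℝ) :
    opNorm M * opNorm M = opNorm (M * Mᵀ) := by
  unfold opNorm
  rw [← star_eq_transpose, _root_.map_mul, map_star]
  set x := Matrix.toEuclideanCLM (𝕜 := ℝ) M
  have h := ContinuousLinearMap.norm_adjoint_comp_self (star x)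
  rw [← ContinuousLinearMap.star_eq_adjoint, star_star] at h
  rw [show x * star x = x.comp (star x) from rfl, h,
    show ‖star x‖ = ‖x‖ from LinearIsometryEquiv.norm_map (ContinuousLinearMap.adjoint (𝕜 := ℝ)) x]

lemma opNorm_sq_eq_transpose_mul_self (M : Matrix (Fin d) (Fin d) ℝ) :
    opNorm M * opNorm M = opNorm (Mᵀ * M) := by
  unfold opNorm
  rw [← star_eq_transpose, _root_.map_mul, map_star]
  exact (ContinuousLinearMap.norm_adjoint_comp_self (Matrix.toEuclideanCLM (𝕜 := ℝ) M)).symm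

lemma frobNorm_nonneg (X : Matrix (Fin d) (Fin d) ℝ) : 0 ≤ frobNorm X := Real.sqrt_nonneg _

lemma frob_sq (X : Matrix (Fin d) (Fin d) ℝ) : frobNorm X ^ 2 = ∑ i, ∑ j, (X i j)^2 :=
  Real.sq_sqrt (by positivity)

lemma vnorm_sq (v : Fin d → ℝ) : vnorm v ^ 2 = ∑ i, (v i)^2 := Real.sq_sqrt (by positivity)

lemma frobNorm_le_of_sq {X : Matrix (Fin d) (Fin d) ℝ} {c : ℝ} (hc : 0 ≤ c)
    (h : ∑ i, ∑ j, (X i j)^2 ≤ c^2) : frobNorm X ≤ c := by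
  rw [frobNorm]
  calc Real.sqrt (∑ i, ∑ j, (X i j)^2) ≤ Real.sqrt (c^2) := Real.sqrt_le_sqrt h
    _ = c := Real.sqrt_sq hc

lemma frobNorm_neg (X : Matrix (Fin d) (Fin d) ℝ) : frobNorm (-X) = frobNorm X := by
  simp [frobNorm]

lemma frobNorm_transpose (X : Matrix (Fin d) (Fin d) ℝ) : frobNorm Xᵀ = frobNorm X := by
  rw [frobNorm, frobNorm, Finset.sum_comm]
  simp [Matrix.transpose_apply]

lemma frobNorm_eq (X : Matrix (Fin d) (Fin d) ℝ) :
    frobNorm X = ‖(WithLp.equiv 2 (Fin d × Fin d → ℝ)).symm (fun p => X p.1 p.2)‖ := by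
  rw [EuclideanSpace.norm_eq, frobNorm]
  congr 1
  rw [Fintype.sum_prod_type]
  simp [Real.norm_eq_abs, sq_abs]

lemma frobNorm_add_le (X Y : Matrix (Fin d) (Fin d) ℝ) :
    frobNorm (X + Y) ≤ frobNorm X + frobNorm Y := by
  rw [frobNorm_eq, frobNorm_eq, frobNorm_eq]
  have : ((WithLp.equiv 2 (Fin d × Fin d → ℝ)).symm (fun p => (X + Y) p.1 p.2)
        : EuclideanSpace ℝ (Fin d × Fin d))
      = (WithLp.equiv 2 (Fin d × Fin d → ℝ)).symm (fun p => X p.1 p.2)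
      + (WithLp.equiv 2 (Fin d × Fin d → ℝ)).symm (fun p => Y p.1 p.2) := rfl
  rw [this]
  exact norm_add_le _ _

lemma frobNorm_mul_le (M X : Matrix (Fin d) (Fin d) ℝ) :
    frobNorm (M * X) ≤ opNorm M * frobNorm X := by
  apply frobNorm_le_of_sq (mul_nonneg (opNorm_nonneg M) (frobNorm_nonneg X))
  have key : ∀ j : Fin d, ∑ i, ((M * X) i j)^2 ≤ (opNorm M)^2 * ∑ i, (X i j)^2 := by
    intro j
    have h1 : ∀ i, (M * X) i j = (M *ᵥ (fun k => X k j)) i := by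
      intro i; simp [Matrix.mul_apply, Matrix.mulVec, dotProduct]
    have h2 := vnorm_mulVec_le M (fun k => X k j)
    have h3 := pow_le_pow_left₀ (vnorm_nonneg _) h2 2
    rw [vnorm_sq, mul_pow, vnorm_sq] at h3
    calc ∑ i, ((M * X) i j)^2 = ∑ i, ((M *ᵥ fun k => X k j) i)^2 := by simp_rw [h1]
      _ ≤ (opNorm M)^2 * ∑ i, (X i j)^2 := h3
  calc ∑ i, ∑ j, ((M * X) i j)^2 = ∑ j, ∑ i, ((M * X) i j)^2 := Finset.sum_comm
    _ ≤ ∑ j, (opNorm M)^2 * ∑ i, (X i j)^2 := Finset.sum_le_sum (fun j _ => key j)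
    _ = (opNorm M)^2 * ∑ j, ∑ i, (X i j)^2 := by rw [Finset.mul_sum]
    _ = (opNorm M)^2 * ∑ i, ∑ j, (X i j)^2 := by rw [Finset.sum_comm]
    _ = (opNorm M * frobNorm X)^2 := by rw [mul_pow, frob_sq]

lemma frobNorm_mul_right_le (X N : Matrix (Fin d) (Fin d) ℝ) :
    frobNorm (X * N) ≤ frobNorm X * opNorm N := by
  calc frobNorm (X * N) = frobNorm ((X * N)ᵀ) := (frobNorm_transpose _).symm
    _ = frobNorm (Nᵀ * Xᵀ) := by rw [Matrix.transpose_mul]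
    _ ≤ opNorm Nᵀ * frobNorm Xᵀ := frobNorm_mul_le _ _
    _ = frobNorm X * opNorm N := by rw [opNorm_transpose, frobNorm_transpose, mul_comm]

lemma opNorm_inv_le {A B : Matrix (Fin d) (Fin d) ℝ} {γ : ℝ} (hAB : A * B = 1)
    (hA : opNorm (A - 1) ≤ γ) (hγ : γ < 1) : opNorm B ≤ (1 - γ)⁻¹ := by
  have hB : B = 1 + (1 - A) * B := by rw [sub_mul, one_mul, hAB]; abel
  have h1 : opNorm ((1 : Matrix (Fin d) (Fin d) ℝ) - A) = opNorm (A - 1) := by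
    rw [show (1 : Matrix (Fin d) (Fin d) ℝ) - A = -(A - 1) by abel, opNorm_neg]
  have h2 : opNorm B ≤ 1 + γ * opNorm B := by
    calc opNorm B = opNorm (1 + (1 - A) * B) := by rw [← hB]
      _ ≤ opNorm 1 + opNorm ((1 - A) * B) := opNorm_add_le _ _
      _ ≤ 1 + opNorm (1 - A) * opNorm B := by
          gcongr
          · exact opNorm_one_le
          · exact opNorm_mul_le _ _
      _ ≤ 1 + γ * opNorm B := by
          have h4 : opNorm (1 - A) ≤ γ := h1 ▸ hA
          have := mul_le_mul_of_nonneg_right h4 (opNorm_nonneg B)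
          linarith
  have h3 := opNorm_nonneg B
  rw [inv_eq_one_div, le_div_iff₀ (by linarith)]
  nlinarith

end Helpers

/-- Proposition: approximate symmetry and transitivity of `≈_{γ,ρ,τ}`. -/
theorem approx_symm_trans {d : ℕ} (γ ρ τ : ℝ) (hγ0 : 0 < γ) (hγ : γ ≤ 0.1)
    (hρ : 0 < ρ) (hτ : 0 < τ)
    (μ₁ μ₂ μ₃ : Fin d → ℝ) (S₁ S₂ S₃ : Matrix (Fin d) (Fin d) ℝ)
    (h₁ : S₁.PosDef) (h₂ : S₂.PosDef) (h₃ : S₃.PosDef) :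
    (approx γ ρ τ (μ₁, S₁) (μ₂, S₂) → approx (2 * γ) (2 * ρ) (2 * τ) (μ₂, S₂) (μ₁, S₁)) ∧
    (approx γ ρ τ (μ₁, S₁) (μ₂, S₂) → approx γ ρ τ (μ₂, S₂) (μ₃, S₃) →
      approx (4 * γ) (4 * ρ) (4 * τ) (μ₁, S₁) (μ₃, S₃)) := by
  have hγ' : γ ≤ 0.1 := hγ
  norm_num at hγ'
  set Q₁ := sqrtInv S₁ with hQ₁
  set Q₂ := sqrtInv S₂ with hQ₂
  set Q₃ := sqrtInv S₃ with hQ₃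
  set R₂ := msqrt S₂ with hR₂
  have e1 : ∀ Y : Matrix (Fin d) (Fin d) ℝ, R₂ * (Q₂ * Y) = Y := fun Y => by
    rw [← mul_assoc, msqrt_mul_sqrtInv h₂, one_mul]
  have e2 : ∀ Y : Matrix (Fin d) (Fin d) ℝ, Q₂ * (R₂ * Y) = Y := fun Y => by
    rw [← mul_assoc, sqrtInv_mul_msqrt h₂, one_mul]
  have e3 : ∀ Y : Matrix (Fin d) (Fin d) ℝ, R₂ * (R₂ * Y) = S₂ * Y := fun Y => by
    rw [← mul_assoc, msqrt_mul_self h₂]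
  constructor
  · -- symmetry
    intro h12
    unfold approx at h12 ⊢
    dsimp only at h12 ⊢
    simp only [← hQ₁, ← hQ₂] at h12 ⊢
    obtain ⟨hop, hfr, hv⟩ := h12
    set D := Q₂ * S₁ * Q₂ - 1 with hD
    set M := Q₁ * R₂ with hM
    have e4 : Q₁ * (S₁ * Q₁) = 1 := by rw [← mul_assoc]; exact sqrtInv_conj h₁
    have key : M * D * (R₂ * Q₁) = 1 - Q₁ * (S₂ * Q₁) := by
      rw [hD, hM]
      simp only [mul_sub, sub_mul, mul_one, one_mul, mul_assoc, e1, e2, e3, e4]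
    have iden : Q₁ * S₂ * Q₁ - 1 = -(M * D * (R₂ * Q₁)) := by
      rw [key, neg_sub, mul_assoc]
    have htr : Mᵀ = R₂ * Q₁ := by
      rw [hM, Matrix.transpose_mul, msqrt_transpose h₂, sqrtInv_transpose h₁]
    have q1q1 : Q₁ * Q₁ = S₁⁻¹ := by
      rw [hQ₁, sqrtInv, ← Matrix.mul_inv_rev, msqrt_mul_self h₁]
    have hW : (Q₂ * S₁ * Q₂) * (R₂ * (S₁⁻¹ * R₂)) = 1 := by
      have eS : S₁ * (S₁⁻¹ * R₂) = R₂ := by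
        rw [← mul_assoc, Matrix.mul_nonsing_inv _ (isUnit_iff_ne_zero.mpr h₁.det_pos.ne'),
          one_mul]
      calc (Q₂ * S₁ * Q₂) * (R₂ * (S₁⁻¹ * R₂))
          = Q₂ * (S₁ * (Q₂ * (R₂ * (S₁⁻¹ * R₂)))) := by simp only [mul_assoc]
        _ = Q₂ * (S₁ * (S₁⁻¹ * R₂)) := by rw [e2]
        _ = Q₂ * R₂ := by rw [eS]
        _ = 1 := sqrtInv_mul_msqrt h₂
    have hMtM : Mᵀ * M = R₂ * (S₁⁻¹ * R₂) := by
      rw [htr, hM]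
      calc (R₂ * Q₁) * (Q₁ * R₂) = R₂ * ((Q₁ * Q₁) * R₂) := by simp only [mul_assoc]
        _ = R₂ * (S₁⁻¹ * R₂) := by rw [q1q1]
    have hMsq : opNorm M * opNorm M ≤ (1 - γ)⁻¹ := by
      rw [opNorm_sq_eq_transpose_mul_self, hMtM]
      exact opNorm_inv_le hW hop (by linarith)
    have hMsq2 : opNorm M * opNorm M ≤ 2 := by
      have h9 : (1 - γ)⁻¹ ≤ 2 := by
        rw [inv_eq_one_div, div_le_iff₀ (by linarith)]
        linarith
      linarith
    have hM2 : opNorm M ≤ 2 := by nlinarith [opNorm_nonneg M]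
    refine ⟨?_, ?_, ?_⟩
    · rw [iden, opNorm_neg]
      calc opNorm (M * D * (R₂ * Q₁))
          ≤ opNorm (M * D) * opNorm (R₂ * Q₁) := opNorm_mul_le _ _
        _ ≤ opNorm M * opNorm D * opNorm (R₂ * Q₁) :=
            mul_le_mul_of_nonneg_right (opNorm_mul_le M D) (opNorm_nonneg _)
        _ = opNorm M * opNorm D * opNorm M := by rw [← htr, opNorm_transpose]
        _ ≤ 2 * γ := by nlinarith [opNorm_nonneg D, opNorm_nonneg M]
    · rw [iden, frobNorm_neg]
      calc frobNorm (M * D * (R₂ * Q₁))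
          ≤ frobNorm (M * D) * opNorm (R₂ * Q₁) := frobNorm_mul_right_le _ _
        _ ≤ opNorm M * frobNorm D * opNorm (R₂ * Q₁) :=
            mul_le_mul_of_nonneg_right (frobNorm_mul_le M D) (opNorm_nonneg _)
        _ = opNorm M * frobNorm D * opNorm M := by rw [← htr, opNorm_transpose]
        _ ≤ 2 * ρ := by nlinarith [frobNorm_nonneg D, opNorm_nonneg M]
    · have hMQ : M * Q₂ = Q₁ := by rw [hM, mul_assoc, msqrt_mul_sqrtInv h₂, mul_one]
      have h5 : Q₁ *ᵥ (μ₂ - μ₁) = -(M *ᵥ (Q₂ *ᵥ (μ₁ - μ₂))) := by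
        rw [Matrix.mulVec_mulVec, hMQ,
          show (μ₁ - μ₂ : Fin d → ℝ) = -(μ₂ - μ₁) by abel, Matrix.mulVec_neg, neg_neg]
      rw [h5, vnorm_neg]
      calc vnorm (M *ᵥ (Q₂ *ᵥ (μ₁ - μ₂)))
          ≤ opNorm M * vnorm (Q₂ *ᵥ (μ₁ - μ₂)) := vnorm_mulVec_le _ _
        _ ≤ 2 * τ := by nlinarith [vnorm_nonneg (Q₂ *ᵥ (μ₁ - μ₂)), opNorm_nonneg M]
  · -- transitivity
    intro h12 h23
    unfold approx at h12 h23 ⊢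
    dsimp only at h12 h23 ⊢
    simp only [← hQ₁, ← hQ₂, ← hQ₃] at h12 h23 ⊢
    obtain ⟨hop12, hfr12, hv12⟩ := h12
    obtain ⟨hop23, hfr23, hv23⟩ := h23
    set D := Q₂ * S₁ * Q₂ - 1 with hD
    set E := Q₃ * S₂ * Q₃ - 1 with hE
    set N := Q₃ * R₂ with hN
    have htr : Nᵀ = R₂ * Q₃ := by
      rw [hN, Matrix.transpose_mul, msqrt_transpose h₂, sqrtInv_transpose h₃]
    have key : Q₃ * S₁ * Q₃ - 1 = N * D * (R₂ * Q₃) + E := by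
      have hterm : N * D * (R₂ * Q₃) = Q₃ * (S₁ * Q₃) - Q₃ * (S₂ * Q₃) := by
        rw [hN, hD]
        simp only [mul_sub, sub_mul, mul_one, one_mul, mul_assoc, e1, e2, e3]
      rw [hterm, hE]
      simp only [mul_assoc]
      abel
    have hNNt : N * Nᵀ = Q₃ * (S₂ * Q₃) := by
      rw [htr, hN]
      calc (Q₃ * R₂) * (R₂ * Q₃) = Q₃ * (R₂ * (R₂ * Q₃)) := by simp only [mul_assoc]
        _ = Q₃ * (S₂ * Q₃) := by rw [e3]
    have hNsq : opNorm N * opNorm N ≤ 1 + γ := by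
      rw [opNorm_sq_eq_self_mul_transpose, hNNt]
      have : Q₃ * (S₂ * Q₃) = E + 1 := by rw [hE, ← mul_assoc]; abel
      rw [this]
      calc opNorm (E + 1) ≤ opNorm E + opNorm 1 := opNorm_add_le _ _
        _ ≤ 1 + γ := by
            have := opNorm_one_le (d := d)
            linarith
    have hN3 : opNorm N ≤ 3 := by nlinarith [opNorm_nonneg N]
    refine ⟨?_, ?_, ?_⟩
    · rw [key]
      calc opNorm (N * D * (R₂ * Q₃) + E)
          ≤ opNorm (N * D * (R₂ * Q₃)) + opNorm E := opNorm_add_le _ _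
        _ ≤ opNorm (N * D) * opNorm (R₂ * Q₃) + opNorm E := by
            have := opNorm_mul_le (N * D) (R₂ * Q₃)
            linarith
        _ ≤ opNorm N * opNorm D * opNorm (R₂ * Q₃) + opNorm E := by
            have := mul_le_mul_of_nonneg_right (opNorm_mul_le N D) (opNorm_nonneg (R₂ * Q₃))
            linarith
        _ = opNorm N * opNorm D * opNorm N + opNorm E := by rw [← htr, opNorm_transpose]
        _ ≤ 4 * γ := by nlinarith [opNorm_nonneg D, opNorm_nonneg N, opNorm_nonneg E]
    · rw [key]
      calc frobNorm (N * D * (R₂ * Q₃) + E)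
          ≤ frobNorm (N * D * (R₂ * Q₃)) + frobNorm E := frobNorm_add_le _ _
        _ ≤ frobNorm (N * D) * opNorm (R₂ * Q₃) + frobNorm E := by
            have := frobNorm_mul_right_le (N * D) (R₂ * Q₃)
            linarith
        _ ≤ opNorm N * frobNorm D * opNorm (R₂ * Q₃) + frobNorm E := by
            have := mul_le_mul_of_nonneg_right (frobNorm_mul_le N D) (opNorm_nonneg (R₂ * Q₃))
            linarith
        _ = opNorm N * frobNorm D * opNorm N + frobNorm E := by rw [← htr, opNorm_transpose]
        _ ≤ 4 * ρ := by nlinarith [frobNorm_nonneg D, opNorm_nonneg N, frobNorm_nonneg E]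
    · have hNQ : N * Q₂ = Q₃ := by rw [hN, mul_assoc, msqrt_mul_sqrtInv h₂, mul_one]
      have h5 : Q₃ *ᵥ (μ₁ - μ₃) = N *ᵥ (Q₂ *ᵥ (μ₁ - μ₂)) + Q₃ *ᵥ (μ₂ - μ₃) := by
        rw [Matrix.mulVec_mulVec, hNQ, ← Matrix.mulVec_add,
          show (μ₁ - μ₂) + (μ₂ - μ₃) = (μ₁ - μ₃ : Fin d → ℝ) by abel]
      rw [h5]
      calc vnorm (N *ᵥ (Q₂ *ᵥ (μ₁ - μ₂)) + Q₃ *ᵥ (μ₂ - μ₃))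
          ≤ vnorm (N *ᵥ (Q₂ *ᵥ (μ₁ - μ₂))) + vnorm (Q₃ *ᵥ (μ₂ - μ₃)) := vnorm_add_le _ _
        _ ≤ opNorm N * vnorm (Q₂ *ᵥ (μ₁ - μ₂)) + vnorm (Q₃ *ᵥ (μ₂ - μ₃)) := by
            have := vnorm_mulVec_le N (Q₂ *ᵥ (μ₁ - μ₂))
            linarith
        _ ≤ 4 * τ := by nlinarith [vnorm_nonneg (Q₂ *ᵥ (μ₁ - μ₂)), opNorm_nonneg N]

end
end

section
/- Let X, X' ∈ ℝ^n be datasets of size n differing in exactly one entry, and let Y₁ ≤ Y₂ ≤ … ≤ Y_n and Y'₁ ≤ Y'₂ ≤ … ≤ Y'_n be the respective sorted orderings of X and X'. Define the multisets Z = {(Y_j, Y_{j+1} − Y_j) : 1 ≤ j ≤ n−1} and Z' = {(Y'_j, Y'_{j+1} − Y'_j) : 1 ≤ j ≤ n−1} of ordered pairs of reals. Then Z and Z' differ in at most 3 elements: there exist orderings of Z and Z' agreeing in all but at most 3 positions; equivalently, the multiset difference Z \ Z' has cardinality at most 3. -/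
open MeasureTheory ProbabilityTheory Matrix Real
open scoped ENNReal

noncomputable section

/-- The sorted (nondecreasing) list of the entries of a dataset. -/
def sortedOf {n : ℕ} (X : Fin n → ℝ) : List ℝ :=
  Multiset.sort (↑(List.ofFn X)) (· ≤ ·)


/-- The multiset of pairs `(Y_j, Y_{j+1} - Y_j)` of consecutive elements of a list. -/
def gaps (l : List ℝ) : Multiset (ℝ × ℝ) :=
  ↑(List.zipWith (fun a b => (a, b - a)) l l.tail)

lemma gaps_nil : gaps [] = 0 := rfl
lemma gaps_singleton (x : ℝ) : gaps [x] = 0 := rfl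
lemma gaps_cons_cons (x y : ℝ) (l : List ℝ) :
    gaps (x :: y :: l) = (x, y - x) ::ₘ gaps (y :: l) := rfl

lemma sort_cons_eq (a : ℝ) (s : Multiset ℝ) :
    Multiset.sort (a ::ₘ s) (· ≤ ·) =
      List.orderedInsert (· ≤ ·) a (Multiset.sort s (· ≤ ·)) := by
  have hperm : List.Perm (Multiset.sort (a ::ₘ s) (· ≤ ·))
      (List.orderedInsert (· ≤ ·) a (Multiset.sort s (· ≤ ·))) := by
    have h2 : List.Perm (List.orderedInsert (· ≤ ·) a (Multiset.sort s (· ≤ ·)))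
        (a :: Multiset.sort s (· ≤ ·)) := List.perm_orderedInsert _ _ _
    refine Multiset.coe_eq_coe.mp ?_ |>.trans h2.symm
    rw [Multiset.sort_eq]
    show a ::ₘ s = ↑(a :: Multiset.sort s (· ≤ ·))
    rw [← Multiset.cons_coe, Multiset.sort_eq]
  exact List.Perm.eq_of_pairwise' (Multiset.pairwise_sort _ _)
    (List.Pairwise.orderedInsert a _ (Multiset.pairwise_sort _ _)) hperm

lemma card_sub_add_le (u v s : Multiset (ℝ × ℝ)) :
    Multiset.card ((u + s) - (v + s)) ≤ Multiset.card u := by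
  rw [add_tsub_add_eq_tsub_right]
  exact Multiset.card_le_card tsub_le_self

lemma gaps_orderedInsert (a : ℝ) (L : List ℝ) :
    Multiset.card (gaps (List.orderedInsert (· ≤ ·) a L) - gaps L) ≤ 2 ∧
    Multiset.card (gaps L - gaps (List.orderedInsert (· ≤ ·) a L)) ≤ 1 := by
  induction L with
  | nil => simp [gaps_nil, gaps_singleton]
  | cons x L ih =>
    rw [List.orderedInsert]
    by_cases hax : a ≤ x
    · rw [if_pos hax]
      have h1 : gaps (a :: x :: L) = {(a, x - a)} + gaps (x :: L) := by
        rw [gaps_cons_cons]; simp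
      have h2 : gaps (x :: L) = 0 + gaps (x :: L) := by simp
      constructor
      · rw [h1]; nth_rewrite 2 [h2]
        exact le_trans (card_sub_add_le _ _ _) (by simp)
      · nth_rewrite 1 [h2]
        rw [h1]
        exact le_trans (card_sub_add_le _ _ _) (by simp)
    · rw [if_neg hax]
      match L with
      | [] => simp [gaps_singleton, gaps_cons_cons, gaps_nil]
      | y :: L' =>
        by_cases hay : a ≤ y
        · have hins : List.orderedInsert (· ≤ ·) a (y :: L') = a :: y :: L' := by
            rw [List.orderedInsert, if_pos hay]
          rw [hins]
          have h1 : gaps (x :: a :: y :: L') =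
              {(x, a - x), (a, y - a)} + gaps (y :: L') := by
            rw [gaps_cons_cons, gaps_cons_cons]; rfl
          have h2 : gaps (x :: y :: L') = {(x, y - x)} + gaps (y :: L') := by
            rw [gaps_cons_cons]; simp
          rw [h1, h2]
          exact ⟨le_trans (card_sub_add_le _ _ _) (by simp),
            le_trans (card_sub_add_le _ _ _) (by simp)⟩
        · have hins : List.orderedInsert (· ≤ ·) a (y :: L') =
              y :: List.orderedInsert (· ≤ ·) a L' := by
            rw [List.orderedInsert, if_neg hay]
          rw [hins]
          have h1 : gaps (x :: y :: List.orderedInsert (· ≤ ·) a L')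
              = {(x, y - x)} + gaps (y :: List.orderedInsert (· ≤ ·) a L') := by
            rw [gaps_cons_cons]; simp
          have h2 : gaps (x :: y :: L') = {(x, y - x)} + gaps (y :: L') := by
            rw [gaps_cons_cons]; simp
          rw [h1, h2, add_tsub_add_eq_tsub_left, add_tsub_add_eq_tsub_left, ← hins]
          exact ih

lemma ofFn_multiset_eq {n : ℕ} (X : Fin n → ℝ) (i : Fin n) :
    (↑(List.ofFn X) : Multiset ℝ) =
      X i ::ₘ Multiset.map X ((↑(List.finRange n) : Multiset (Fin n)).erase i) := by
  have hi : i ∈ (↑(List.finRange n) : Multiset (Fin n)) := by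
    simp [List.mem_finRange]
  calc (↑(List.ofFn X) : Multiset ℝ)
      = Multiset.map X ↑(List.finRange n) := by
        rw [List.ofFn_eq_map]; rfl
    _ = Multiset.map X (i ::ₘ (↑(List.finRange n) : Multiset (Fin n)).erase i) := by
        rw [Multiset.cons_erase hi]
    _ = _ := by rw [Multiset.map_cons]

/-- Lemma: changing one datapoint changes the multiset of consecutive gaps of the
sorted dataset in at most 3 elements. -/
theorem gaps_change_by_three {n : ℕ} (X X' : Fin n → ℝ)
    (h : ∃ i : Fin n, X i ≠ X' i ∧ ∀ j : Fin n, j ≠ i → X j = X' j) :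
    Multiset.card (gaps (sortedOf X) - gaps (sortedOf X')) ≤ 3 := by
  obtain ⟨i, -, hji⟩ := h
  set M : Multiset ℝ := Multiset.map X ((↑(List.finRange n) : Multiset (Fin n)).erase i)
    with hM
  have hnd : (↑(List.finRange n) : Multiset (Fin n)).Nodup := by
    simpa using List.nodup_finRange n
  have hM' : Multiset.map X' ((↑(List.finRange n) : Multiset (Fin n)).erase i) = M := by
    rw [hM]
    refine Multiset.map_congr rfl fun j hj => ?_
    exact (hji j (hnd.mem_erase_iff.mp hj).1).symm
  have hX : sortedOf X = List.orderedInsert (· ≤ ·) (X i) (Multiset.sort M (· ≤ ·)) := by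
    rw [sortedOf, ofFn_multiset_eq X i, sort_cons_eq]
  have hX' : sortedOf X' = List.orderedInsert (· ≤ ·) (X' i) (Multiset.sort M (· ≤ ·)) := by
    rw [sortedOf, ofFn_multiset_eq X' i, sort_cons_eq, hM']
  set L := Multiset.sort M (· ≤ ·)
  have h1 := gaps_orderedInsert (X i) L
  have h2 := gaps_orderedInsert (X' i) L
  rw [hX, hX']
  calc Multiset.card (gaps (List.orderedInsert (· ≤ ·) (X i) L) -
        gaps (List.orderedInsert (· ≤ ·) (X' i) L))
      ≤ Multiset.card ((gaps (List.orderedInsert (· ≤ ·) (X i) L) - gaps L) +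
        (gaps L - gaps (List.orderedInsert (· ≤ ·) (X' i) L))) :=
        Multiset.card_le_card tsub_le_tsub_add_tsub
    _ = _ + _ := Multiset.card_add _ _
    _ ≤ 2 + 1 := add_le_add h1.1 h2.2
    _ ≤ 3 := by norm_num

end
end
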